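/- arXiv:1304.4103 — 3 statements merged into one kernel-verified Lean document; each statement's English description precedes it below -/
import Mathlib

section
/- Let h > 0 and k > 0 with k·h ≤ 2√2. Then for ξ ∈ [0, √2·π/h], one has σ^{fd5}_h(ξ/√2, ξ/√2) = 0 if and only if ξ = (√2/h) · arccos(1 − k²h²/4). -/
/-- Symbol of the standard 5-point finite difference Helmholtz operator. -/
noncomputable def sigmaFd5 (h k ξ₁ ξ₂ : ℝ) : ℝ :=
  h ^ (-2 : ℤ) * (4 - 2 * Real.cos (h * ξ₁) - 2 * Real.cos (h * ξ₂)) - k ^ 2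

/-- diagonal zero of the fd5 symbol. -/
theorem stmt2 (h k : ℝ) (hh : 0 < h) (hk : 0 < k)
    (hkh : k * h ≤ 2 * Real.sqrt 2)
    (ξ : ℝ) (hξ : ξ ∈ Set.Icc 0 (Real.sqrt 2 * Real.pi / h)) :
    sigmaFd5 h k (ξ / Real.sqrt 2) (ξ / Real.sqrt 2) = 0 ↔
      ξ = Real.sqrt 2 / h * Real.arccos (1 - k ^ 2 * h ^ 2 / 4) := by
  obtain ⟨hξ0, hξ1⟩ := hξ
  have hs2 : (0:ℝ) < Real.sqrt 2 := by positivity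
  have hs2sq : Real.sqrt 2 ^ 2 = 2 := Real.sq_sqrt (by norm_num)
  set t := h * (ξ / Real.sqrt 2) with ht
  have ht0 : 0 ≤ t := by positivity
  have htpi : t ≤ Real.pi := by
    have h1 : ξ * h ≤ Real.sqrt 2 * Real.pi := by
      calc ξ * h ≤ (Real.sqrt 2 * Real.pi / h) * h := by
            exact mul_le_mul_of_nonneg_right hξ1 hh.le
        _ = Real.sqrt 2 * Real.pi := by field_simp
    rw [ht]
    rw [mul_div_assoc', div_le_iff₀ hs2]
    nlinarith [Real.pi_pos]
  set c := 1 - k ^ 2 * h ^ 2 / 4 with hc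
  have hkh2 : k ^ 2 * h ^ 2 ≤ 8 := by nlinarith [mul_pos hk hh]
  have hcm : -1 ≤ c := by rw [hc]; linarith
  have hcp : c ≤ 1 := by
    rw [hc]; nlinarith [mul_pos hk hh]
  have h2 : (h:ℝ) ^ 2 ≠ 0 := by positivity
  have hzpow : h ^ (-2 : ℤ) = (h ^ 2)⁻¹ := by
    rw [zpow_neg]; norm_num; try rfl
  have key : sigmaFd5 h k (ξ / Real.sqrt 2) (ξ / Real.sqrt 2) = 0 ↔ Real.cos t = c := by
    unfold sigmaFd5
    rw [hzpow, ← ht, sub_eq_zero, hc]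
    rw [inv_mul_eq_div, div_eq_iff h2]
    constructor
    · intro H; nlinarith
    · intro H; nlinarith
  rw [key]
  constructor
  · intro H
    have : t = Real.arccos c := by
      rw [← Real.arccos_cos ht0 htpi, H]
    rw [← this, ht]
    field_simp
  · intro H
    have : t = Real.arccos c := by
      rw [ht, H]
      field_simp
    rw [this, Real.cos_arccos hcm hcp]
end

section
/- Let h > 0, k ∈ ℝ, and let (c, s) be a unit vector with c ≥ 0, s ≥ 0 and c² + s² = 1. Then the function ξ ↦ σ^{fd5}_h(ξc, ξs) is strictly increasing on the interval [0, π/h]. -/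
lemma aux_le (h a x y : ℝ) (hh : 0 < h) (ha0 : 0 ≤ a) (ha1 : a ≤ 1)
    (hx0 : 0 ≤ x) (hxy : x ≤ y) (hyπ : h * y ≤ Real.pi) :
    Real.cos (h * (y * a)) ≤ Real.cos (h * (x * a)) := by
  apply Real.cos_le_cos_of_nonneg_of_le_pi
  · positivity
  · nlinarith [mul_nonneg (mul_nonneg hh.le (hx0.trans hxy)) (sub_nonneg.mpr ha1)]
  · nlinarith [mul_nonneg (mul_nonneg hh.le ha0) (sub_nonneg.mpr hxy)]

lemma aux_lt (h a x y : ℝ) (hh : 0 < h) (ha0 : 0 < a) (ha1 : a ≤ 1)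
    (hx0 : 0 ≤ x) (hxy : x < y) (hyπ : h * y ≤ Real.pi) :
    Real.cos (h * (y * a)) < Real.cos (h * (x * a)) := by
  apply Real.cos_lt_cos_of_nonneg_of_le_pi
  · positivity
  · nlinarith [mul_nonneg (mul_nonneg hh.le (hx0.trans hxy.le)) (sub_nonneg.mpr ha1)]
  · nlinarith [mul_pos (mul_pos hh ha0) (sub_pos.mpr hxy)]

/-- along a direction in the first quadrant, the fd5 symbol is
strictly increasing in the radial variable on `[0, π/h]`. -/
theorem stmt3 (h k : ℝ) (hh : 0 < h) (c s : ℝ) (hc : 0 ≤ c) (hs : 0 ≤ s)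
    (hcs : c ^ 2 + s ^ 2 = 1) :
    StrictMonoOn (fun ξ : ℝ => sigmaFd5 h k (ξ * c) (ξ * s))
      (Set.Icc 0 (Real.pi / h)) := by
  intro x hx y hy hxy
  obtain ⟨hx0, _⟩ := hx
  obtain ⟨hy0, hyπ⟩ := hy
  have hc1 : c ≤ 1 := by nlinarith [sq_nonneg s]
  have hs1 : s ≤ 1 := by nlinarith [sq_nonneg c]
  have hyh : h * y ≤ Real.pi := by
    rw [le_div_iff₀ hh] at hyπ; linarith [hyπ]
  have key : Real.cos (h * (y * c)) + Real.cos (h * (y * s)) <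
      Real.cos (h * (x * c)) + Real.cos (h * (x * s)) := by
    rcases hc.eq_or_lt with hc0 | hcpos
    · have hs1' : s = 1 := by nlinarith
      have h1 := aux_lt h s x y hh (by rw [hs1']; norm_num) hs1 hx0 hxy hyh
      have h2 := aux_le h c x y hh hc hc1 hx0 hxy.le hyh
      linarith
    · have h1 := aux_lt h c x y hh hcpos hc1 hx0 hxy hyh
      have h2 := aux_le h s x y hh hs hs1 hx0 hxy.le hyh
      linarith
  simp only [sigmaFd5]
  have hpos : (0:ℝ) < h ^ (-2:ℤ) := by positivity
  have := mul_lt_mul_of_pos_left (by linarith [key] :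
    4 - 2 * Real.cos (h * (x * c)) - 2 * Real.cos (h * (x * s)) <
    4 - 2 * Real.cos (h * (y * c)) - 2 * Real.cos (h * (y * s))) hpos
  linarith
end

section
/- Let h > 0, let (c, s) be a unit vector with c ≥ 0, s ≥ 0 and c² + s² = 1, and let k > 0 satisfy k²h² < 4 − 2cos(πc) − 2cos(πs). Then there exists a unique ξ ∈ (0, π/h) such that σ^{fd5}_h(ξc, ξs) = 0. (This ξ is the dispersion wavenumber ξ^{fd5}_h(θ) in the direction (c, s), whose quotient with ω defines the discrete phase slowness.) -/
private lemma aux_mono (h c s : ℝ) (hh : 0 < h) (hc : 0 ≤ c) (hs : 0 ≤ s)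
    (hc1 : c ≤ 1) (hs1 : s ≤ 1) (hpos : 0 < c ∨ 0 < s) :
    StrictMonoOn (fun ξ : ℝ => 4 - 2 * Real.cos (h * (ξ * c)) - 2 * Real.cos (h * (ξ * s)))
      (Set.Icc 0 (Real.pi / h)) := by
  intro x hx y hy hxy
  simp only
  have hπ := Real.pi_pos
  have hx0 : 0 ≤ x := hx.1
  have hy0 : 0 ≤ y := hy.1
  have hxπ : h * x ≤ Real.pi := by
    have := hx.2; rw [le_div_iff₀ hh] at this; linarith
  have hyπ : h * y ≤ Real.pi := by
    have := hy.2; rw [le_div_iff₀ hh] at this; linarith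
  have key : ∀ a : ℝ, 0 ≤ a → a ≤ 1 → Real.cos (h * (y * a)) ≤ Real.cos (h * (x * a)) := by
    intro a ha ha1
    rcases eq_or_lt_of_le ha with heq | ha
    · simp [← heq]
    · apply Real.strictAntiOn_cos.le_iff_ge ?_ ?_ |>.mpr
      · nlinarith [mul_pos hh ha]
      · exact ⟨by positivity, by nlinarith⟩
      · exact ⟨by positivity, by nlinarith⟩
  have keyst : ∀ a : ℝ, 0 < a → a ≤ 1 → Real.cos (h * (y * a)) < Real.cos (h * (x * a)) := by
    intro a ha ha1
    apply Real.strictAntiOn_cos ⟨by positivity, by nlinarith⟩ ⟨by positivity, by nlinarith⟩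
    nlinarith [mul_pos hh ha]
  rcases hpos with hcp | hsp
  · have h1 := keyst c hcp hc1
    have h2 := key s hs hs1
    linarith
  · have h1 := keyst s hsp hs1
    have h2 := key c hc hc1
    linarith

/-- existence and uniqueness of the dispersion wavenumber of the
fd5 operator in a given direction. -/
theorem stmt4 (h k : ℝ) (hh : 0 < h) (c s : ℝ) (hc : 0 ≤ c) (hs : 0 ≤ s)
    (hcs : c ^ 2 + s ^ 2 = 1) (hk : 0 < k)
    (hkh : k ^ 2 * h ^ 2 < 4 - 2 * Real.cos (Real.pi * c) - 2 * Real.cos (Real.pi * s)) :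
    ∃! ξ : ℝ, ξ ∈ Set.Ioo 0 (Real.pi / h) ∧ sigmaFd5 h k (ξ * c) (ξ * s) = 0 := by
  have hπ := Real.pi_pos
  have hc1 : c ≤ 1 := by nlinarith
  have hs1 : s ≤ 1 := by nlinarith
  have hpos : 0 < c ∨ 0 < s := by
    by_contra hcon
    push_neg at hcon
    have : c = 0 := le_antisymm hcon.1 hc
    have : s = 0 := le_antisymm hcon.2 hs
    nlinarith
  set F : ℝ → ℝ := fun ξ => 4 - 2 * Real.cos (h * (ξ * c)) - 2 * Real.cos (h * (ξ * s)) with hF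
  have hmono : StrictMonoOn F (Set.Icc 0 (Real.pi / h)) := aux_mono h c s hh hc hs hc1 hs1 hpos
  have hcont : ContinuousOn F (Set.Icc 0 (Real.pi / h)) := by fun_prop
  have hle : (0 : ℝ) ≤ Real.pi / h := by positivity
  have hF0 : F 0 = 0 := by simp [hF]; norm_num
  have hFπ : F (Real.pi / h) = 4 - 2 * Real.cos (Real.pi * c) - 2 * Real.cos (Real.pi * s) := by
    simp only [hF]
    rw [show h * (Real.pi / h * c) = Real.pi * c by field_simp,
      show h * (Real.pi / h * s) = Real.pi * s by field_simp]
  have hiv := intermediate_value_Ioo hle hcont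
  have hmem : k ^ 2 * h ^ 2 ∈ Set.Ioo (F 0) (F (Real.pi / h)) := by
    rw [hF0, hFπ]; exact ⟨by positivity, hkh⟩
  obtain ⟨ξ, hξmem, hξval⟩ := hiv hmem
  have sigma_iff : ∀ x : ℝ, sigmaFd5 h k (x * c) (x * s) = 0 ↔ F x = k ^ 2 * h ^ 2 := by
    intro x
    have hh' : h ≠ 0 := ne_of_gt hh
    simp only [sigmaFd5, hF]
    rw [zpow_neg, zpow_two]
    constructor
    · intro hx
      have : (h * h)⁻¹ * (4 - 2 * Real.cos (h * (x * c)) - 2 * Real.cos (h * (x * s))) = k ^ 2 := by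
        linarith
      field_simp at this
      simp only [mul_assoc] at this
      linarith [this]
    · intro hx
      rw [hx]
      field_simp
      ring
  refine ⟨ξ, ⟨hξmem, (sigma_iff ξ).mpr hξval⟩, ?_⟩
  rintro y ⟨hymem, hyval⟩
  have hyval' : F y = k ^ 2 * h ^ 2 := (sigma_iff y).mp hyval
  exact hmono.injOn (Set.mem_Icc_of_Ioo hymem) (Set.mem_Icc_of_Ioo hξmem) (hyval'.trans hξval.symm)
end
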